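/- Let X be a positive random variable and a > 0. The condition E[e^{-tX}] = O(t^{-a}) as t → ∞ holds if and only if P(X ≤ x) = O(x^a) as x → 0+. -/

import Mathlib

open MeasureTheory Filter

section aux

lemma my_exp_integrable {Ω : Type*} [MeasurableSpace Ω] (μ : Measure Ω) [IsProbabilityMeasure μ]
    (X : Ω → ℝ) (hXmeas : Measurable X) (hXpos : ∀ ω, 0 < X ω) {t : ℝ} (ht : 0 ≤ t) :
    Integrable (fun ω => Real.exp (-t * X ω)) μ := by
  refine (integrable_const (1:ℝ)).mono' ?_ ?_
  · exact (Real.measurable_exp.comp ((hXmeas.const_mul (-t)))).aestronglyMeasurable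
  · refine Filter.Eventually.of_forall fun ω => ?_
    rw [Real.norm_eq_abs, abs_of_nonneg (Real.exp_pos _).le]
    calc Real.exp (-t * X ω) ≤ Real.exp 0 := by
          apply Real.exp_le_exp.mpr
          nlinarith [(hXpos ω).le]
      _ = 1 := Real.exp_zero

lemma my_rpow_le_exp (a : ℝ) (ha : 0 < a) :
    ∃ K : ℝ, 1 ≤ K ∧ ∀ u : ℝ, 0 ≤ u → u ^ a ≤ K * Real.exp (u / 2) := by
  have htend := tendsto_rpow_mul_exp_neg_mul_atTop_nhds_zero a (1/2) (by norm_num)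
  have hev : ∀ᶠ u in atTop, u ^ a * Real.exp (-(1/2) * u) ≤ 1 :=
    htend.eventually (eventually_le_nhds (by norm_num))
  obtain ⟨M, hM⟩ := eventually_atTop.mp hev
  set M' := max M 0 with hM'
  refine ⟨max 1 (M' ^ a), le_max_left _ _, fun u hu => ?_⟩
  have hexp1 : (1:ℝ) ≤ Real.exp (u / 2) := Real.one_le_exp (by linarith)
  rcases le_or_gt u M' with h | h
  · have h1 : u ^ a ≤ M' ^ a := Real.rpow_le_rpow hu h ha.le
    have h2 : M' ^ a ≤ max 1 (M' ^ a) := le_max_right _ _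
    nlinarith [Real.rpow_nonneg (le_max_right M 0) a]
  · have hMu : M ≤ u := le_trans (le_max_left M 0) h.le
    have h1 := hM u hMu
    have he : Real.exp (-(1/2) * u) * Real.exp (u / 2) = 1 := by
      rw [← Real.exp_add]; ring_nf; exact Real.exp_zero
    have hE : (0:ℝ) < Real.exp (u / 2) := Real.exp_pos _
    have h2 : u ^ a ≤ Real.exp (u / 2) := by nlinarith
    nlinarith [mul_le_mul_of_nonneg_right (le_max_left (1:ℝ) (M' ^ a)) hE.le]

lemma my_neg_log_int (a : ℝ) (ha : 0 < a) :
    IntegrableOn (fun s => (-Real.log s) ^ a) (Set.Ioo (0:ℝ) 1) := by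
  obtain ⟨K, hK1, hK⟩ := my_rpow_le_exp a ha
  have hdom : IntegrableOn (fun s : ℝ => K * s ^ (-(1:ℝ)/2)) (Set.Ioo (0:ℝ) 1) := by
    exact ((intervalIntegral.integrableOn_Ioo_rpow_iff one_pos).mpr (by norm_num)).const_mul K
  refine hdom.mono' ?_ ?_
  · exact ((Real.measurable_log.neg).pow_const a).aestronglyMeasurable
  · filter_upwards [ae_restrict_mem measurableSet_Ioo] with s hs
    have hlog : 0 < -Real.log s := by nlinarith [Real.log_neg hs.1 hs.2]
    rw [Real.norm_eq_abs, abs_of_nonneg (Real.rpow_nonneg hlog.le a)]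
    have key := hK (-Real.log s) hlog.le
    have hse : s ^ (-(1:ℝ)/2) = Real.exp ((-Real.log s) / 2) := by
      rw [Real.rpow_def_of_pos hs.1]; congr 1; ring
    rw [hse]
    exact key

end aux

/-- For a positive random variable `X` and `a > 0`:
`E[e^{-tX}] = O(t^{-a})` as `t → ∞` iff `P(X ≤ x) = O(x^a)` as `x → 0+`. -/
theorem stmt_1 {Ω : Type*} [MeasurableSpace Ω] (μ : Measure Ω) [IsProbabilityMeasure μ]
    (X : Ω → ℝ) (hXmeas : Measurable X) (hXpos : ∀ ω, 0 < X ω)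
    (a : ℝ) (ha : 0 < a) :
    ((fun t : ℝ => ∫ ω, Real.exp (-t * X ω) ∂μ) =O[atTop] fun t : ℝ => t ^ (-a)) ↔
      ((fun x : ℝ => (μ {ω | X ω ≤ x}).toReal) =O[nhdsWithin 0 (Set.Ioi 0)]
        fun x : ℝ => x ^ a) := by
  constructor
  · -- forward direction
    intro h
    obtain ⟨c, hc⟩ := h.bound
    obtain ⟨t₀, ht₀⟩ := eventually_atTop.mp hc
    set T := max t₀ 1 with hT
    have hTpos : (0:ℝ) < T := lt_of_lt_of_le one_pos (le_max_right _ _)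
    apply Asymptotics.IsBigO.of_bound (Real.exp 1 * c)
    have hmem : Set.Ioo (0:ℝ) (1/T) ∈ nhdsWithin 0 (Set.Ioi 0) :=
      Ioo_mem_nhdsGT_of_mem ⟨le_refl 0, by positivity⟩
    filter_upwards [hmem] with x hx
    have hx0 : 0 < x := hx.1
    have hxT : T ≤ 1 / x := by
      rw [le_div_iff₀ hx0]
      have := (lt_div_iff₀ hTpos).mp hx.2
      linarith
    have key := ht₀ (1/x) (le_trans (le_max_left _ _) hxT)
    -- lower bound on the Laplace transform
    have hms : MeasurableSet {ω | X ω ≤ x} := hXmeas measurableSet_Iic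
    have hind := integral_indicator_const (μ := μ) (Real.exp (-1)) hms
    have hmono : Real.exp (-1) * (μ {ω | X ω ≤ x}).toReal
        ≤ ∫ ω, Real.exp (-(1/x) * X ω) ∂μ := by
      rw [mul_comm, ← smul_eq_mul, ← measureReal_def, ← hind]
      refine integral_mono_of_nonneg ?_
        (my_exp_integrable μ X hXmeas hXpos (by positivity)) ?_
      · exact Filter.Eventually.of_forall fun ω =>
          Set.indicator_nonneg (fun _ _ => (Real.exp_pos _).le) ω
      · refine Filter.Eventually.of_forall fun ω => ?_
        by_cases hω : X ω ≤ x
        · have hmem' : ω ∈ {ω | X ω ≤ x} := hω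
          rw [Set.indicator_of_mem hmem']
          apply Real.exp_le_exp.mpr
          have h1 : (1/x) * X ω ≤ (1/x) * x :=
            mul_le_mul_of_nonneg_left hω (by positivity)
          rw [one_div_mul_cancel hx0.ne'] at h1
          nlinarith
        · have hmem' : ω ∉ {ω | X ω ≤ x} := hω
          rw [Set.indicator_of_notMem hmem']
          exact (Real.exp_pos _).le
    have hnormpow : ‖(1/x : ℝ) ^ (-a)‖ = x ^ a := by
      rw [Real.norm_eq_abs, abs_of_nonneg (Real.rpow_nonneg (by positivity) _),
        one_div, Real.rpow_neg (by positivity), Real.inv_rpow hx0.le, inv_inv]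
    rw [hnormpow] at key
    have hIle : ∫ ω, Real.exp (-(1/x) * X ω) ∂μ ≤ c * x ^ a := by
      calc ∫ ω, Real.exp (-(1/x) * X ω) ∂μ
          ≤ ‖∫ ω, Real.exp (-(1/x) * X ω) ∂μ‖ := le_abs_self _
        _ ≤ c * x ^ a := key
    have he1 : Real.exp 1 * Real.exp (-1) = 1 := by
      rw [← Real.exp_add]; norm_num
    rw [Real.norm_eq_abs, abs_of_nonneg ENNReal.toReal_nonneg,
      Real.norm_eq_abs, abs_of_nonneg (Real.rpow_nonneg hx0.le _)]
    nlinarith [Real.exp_pos (1:ℝ), ENNReal.toReal_nonneg (a := μ {ω | X ω ≤ x})]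
  · -- reverse direction
    intro h
    obtain ⟨c, hc⟩ := h.bound
    obtain ⟨δ, hδ0, hδ⟩ := Metric.mem_nhdsWithin_iff.mp hc
    set C₁ := max c (δ ^ (-a)) with hC₁def
    have hC1 : ∀ x : ℝ, 0 < x → (μ {ω | X ω ≤ x}).toReal ≤ C₁ * x ^ a := by
      intro x hx
      have hxa : (0:ℝ) ≤ x ^ a := Real.rpow_nonneg hx.le a
      rcases lt_or_ge x δ with hlt | hge
      · have hmem : x ∈ Metric.ball (0:ℝ) δ ∩ Set.Ioi 0 := by
          constructor
          · rw [Metric.mem_ball, Real.dist_eq, sub_zero, abs_of_pos hx]; exact hlt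
          · exact hx
        have hb := hδ hmem
        simp only [Set.mem_setOf_eq, Real.norm_eq_abs,
          abs_of_nonneg ENNReal.toReal_nonneg, abs_of_nonneg hxa] at hb
        calc (μ {ω | X ω ≤ x}).toReal ≤ c * x ^ a := hb
          _ ≤ C₁ * x ^ a := mul_le_mul_of_nonneg_right (le_max_left _ _) hxa
      · have hP : (μ {ω | X ω ≤ x}).toReal ≤ 1 := by
          have := ENNReal.toReal_mono (by simp) (prob_le_one (μ := μ) (s := {ω | X ω ≤ x}))
          simpa using this
        have hδa : (0:ℝ) < δ ^ a := Real.rpow_pos_of_pos hδ0 a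
        have h2 : δ ^ a ≤ x ^ a := Real.rpow_le_rpow hδ0.le hge ha.le
        have h1 : 1 ≤ δ ^ (-a) * x ^ a := by
          rw [Real.rpow_neg hδ0.le, inv_mul_eq_div, le_div_iff₀ hδa]
          linarith
        calc (μ {ω | X ω ≤ x}).toReal ≤ 1 := hP
          _ ≤ δ ^ (-a) * x ^ a := h1
          _ ≤ C₁ * x ^ a := mul_le_mul_of_nonneg_right (le_max_right _ _) hxa
    have hint := my_neg_log_int a ha
    set K₂ := ∫ s in Set.Ioo (0:ℝ) 1, (-Real.log s) ^ a with hK₂def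
    have hK₂ : 0 ≤ K₂ := by
      refine setIntegral_nonneg measurableSet_Ioo fun s hs => ?_
      exact Real.rpow_nonneg (by nlinarith [Real.log_neg hs.1 hs.2]) a
    apply Asymptotics.IsBigO.of_bound (C₁ * K₂)
    filter_upwards [eventually_ge_atTop (1:ℝ)] with t ht
    have ht0 : (0:ℝ) < t := lt_of_lt_of_le one_pos ht
    have hf := my_exp_integrable μ X hXmeas hXpos ht0.le
    have hnn : 0 ≤ᵐ[μ] fun ω => Real.exp (-t * X ω) :=
      Filter.Eventually.of_forall fun ω => (Real.exp_pos _).le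
    have heq := hf.integral_eq_integral_meas_lt hnn
    have hI0 : 0 ≤ ∫ ω, Real.exp (-t * X ω) ∂μ :=
      integral_nonneg fun ω => (Real.exp_pos _).le
    rw [Real.norm_eq_abs, abs_of_nonneg hI0, Real.norm_eq_abs,
      abs_of_nonneg (Real.rpow_nonneg ht0.le _), heq]
    set F : ℝ → ℝ := Set.indicator (Set.Ioo 0 1)
      (fun s => (C₁ * t ^ (-a)) * (-Real.log s) ^ a) with hFdef
    have hFint : IntegrableOn F (Set.Ioi 0) := by
      have : Integrable F volume :=
        (integrable_indicator_iff measurableSet_Ioo).mpr (hint.const_mul _)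
      exact this.integrableOn
    have hle : ∀ s ∈ Set.Ioi (0:ℝ),
        (μ {ω | s < Real.exp (-t * X ω)}).toReal ≤ F s := by
      intro s hs
      rw [Set.mem_Ioi] at hs
      rcases lt_or_ge s 1 with hs1 | hs1
      · have hslog : 0 < -Real.log s := by nlinarith [Real.log_neg hs hs1]
        have hsub : {ω | s < Real.exp (-t * X ω)} ⊆ {ω | X ω ≤ (-Real.log s)/t} := by
          intro ω hω
          rw [Set.mem_setOf_eq] at hω ⊢
          have hlog := Real.log_lt_log hs hω
          rw [Real.log_exp] at hlog
          rw [le_div_iff₀ ht0]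
          nlinarith
        calc (μ {ω | s < Real.exp (-t * X ω)}).toReal
            ≤ (μ {ω | X ω ≤ (-Real.log s)/t}).toReal :=
              ENNReal.toReal_mono (measure_ne_top μ _) (measure_mono hsub)
          _ ≤ C₁ * ((-Real.log s)/t) ^ a := hC1 _ (div_pos hslog ht0)
          _ = (C₁ * t ^ (-a)) * (-Real.log s) ^ a := by
              rw [Real.div_rpow hslog.le ht0.le, Real.rpow_neg ht0.le]
              ring
          _ = F s := by
              rw [hFdef, Set.indicator_of_mem (show s ∈ Set.Ioo (0:ℝ) 1 from ⟨hs, hs1⟩)]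
      · have hempty : {ω | s < Real.exp (-t * X ω)} = ∅ := by
          ext ω
          simp only [Set.mem_setOf_eq, Set.mem_empty_iff_false, iff_false, not_lt]
          have : Real.exp (-t * X ω) < 1 := by
            calc Real.exp (-t * X ω) < Real.exp 0 :=
                Real.exp_lt_exp.mpr (by nlinarith [hXpos ω])
              _ = 1 := Real.exp_zero
          linarith
        rw [hempty, measure_empty, hFdef,
          Set.indicator_of_notMem (fun hmem => absurd hmem.2 (not_lt.mpr hs1))]
        simp
    calc ∫ s in Set.Ioi (0:ℝ), (μ {ω | s < Real.exp (-t * X ω)}).toReal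
        ≤ ∫ s in Set.Ioi (0:ℝ), F s := by
          refine integral_mono_of_nonneg
            (Filter.Eventually.of_forall fun s => ENNReal.toReal_nonneg) hFint ?_
          filter_upwards [ae_restrict_mem measurableSet_Ioi] with s hs
          exact hle s hs
      _ = ∫ s in Set.Ioo (0:ℝ) 1, (C₁ * t ^ (-a)) * (-Real.log s) ^ a := by
          rw [hFdef, setIntegral_indicator measurableSet_Ioo,
            Set.inter_eq_self_of_subset_right Set.Ioo_subset_Ioi_self]
      _ = (C₁ * t ^ (-a)) * K₂ := by rw [MeasureTheory.integral_const_mul]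
      _ = C₁ * K₂ * t ^ (-a) := by ring
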